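/- Let p be an odd prime and K ≥ 1. Then the number of equivalence classes of ℤ/p^Kℤ under the square-multiplication relation equals 2K + 1. -/

import Mathlib

/-- The square-multiplication relation on `ℤ/nℤ`: `a ∼ b` iff `b = j² · a` for some unit `j`. -/
def sqRel (n : ℕ) (a b : ZMod n) : Prop :=
  ∃ j : (ZMod n)ˣ, b = (j : ZMod n) ^ 2 * a

section Helpers

lemma SqRelAux.isSquare_of_odd_orderOf {G : Type*} [Monoid G] {t : G} (h : Odd (orderOf t)) :
    IsSquare t := by
  obtain ⟨k, hk⟩ := h
  refine ⟨t ^ (k + 1), ?_⟩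
  rw [← pow_add]
  have : k + 1 + (k + 1) = orderOf t + 1 := by omega
  rw [this, pow_succ, pow_orderOf_eq_one, one_mul]

lemma SqRelAux.card_ker_unitsMap (p m : ℕ) [hp : Fact p.Prime] (hm : 1 ≤ m) :
    Nat.card (ZMod.unitsMap (dvd_pow_self p (Nat.one_le_iff_ne_zero.mp hm)) :
      (ZMod (p ^ m))ˣ →* (ZMod p)ˣ).ker = p ^ (m - 1) := by
  have hpm : NeZero (p ^ m) := ⟨pow_ne_zero _ hp.out.pos.ne'⟩
  set f := (ZMod.unitsMap (dvd_pow_self p (Nat.one_le_iff_ne_zero.mp hm)) :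
      (ZMod (p ^ m))ˣ →* (ZMod p)ˣ)
  have hsurj : Function.Surjective f := ZMod.unitsMap_surjective _
  have h1 : Nat.card ((ZMod (p ^ m))ˣ ⧸ f.ker) = Nat.card (ZMod p)ˣ :=
    Nat.card_congr (QuotientGroup.quotientKerEquivOfSurjective f hsurj).toEquiv
  have h2 := Subgroup.card_eq_card_quotient_mul_card_subgroup f.ker
  rw [h1] at h2
  have hG : Nat.card (ZMod (p ^ m))ˣ = p ^ (m - 1) * (p - 1) := by
    rw [Nat.card_eq_fintype_card, ZMod.card_units_eq_totient,
      Nat.totient_prime_pow hp.out hm]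
  have hT : Nat.card (ZMod p)ˣ = p - 1 := by
    rw [Nat.card_eq_fintype_card, ZMod.card_units_eq_totient, Nat.totient_prime hp.out]
  rw [hG, hT] at h2
  have hp1 : 0 < p - 1 := by have := hp.out.two_le; omega
  nlinarith [Nat.card (f.ker), h2]

lemma SqRelAux.isSquare_unit_of_isSquare_map (p m : ℕ) [hp : Fact p.Prime] (hm : 1 ≤ m)
    (hodd : Odd p) (u : (ZMod (p ^ m))ˣ)
    (h : IsSquare (ZMod.unitsMap (dvd_pow_self p (Nat.one_le_iff_ne_zero.mp hm)) u)) :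
    IsSquare u := by
  set f := (ZMod.unitsMap (dvd_pow_self p (Nat.one_le_iff_ne_zero.mp hm)) :
      (ZMod (p ^ m))ˣ →* (ZMod p)ˣ)
  have hsurj : Function.Surjective f := ZMod.unitsMap_surjective _
  obtain ⟨w, hw⟩ := h
  obtain ⟨x, hx⟩ := hsurj w
  have hker : u * (x * x)⁻¹ ∈ f.ker := by
    rw [MonoidHom.mem_ker, map_mul, map_inv, map_mul, hx, ← hw, mul_inv_cancel]
  have hord : orderOf (u * (x * x)⁻¹) ∣ p ^ (m - 1) := by
    rw [← SqRelAux.card_ker_unitsMap p m hm]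
    exact Subgroup.orderOf_dvd_natCard _ hker
  have hoddord : Odd (orderOf (u * (x * x)⁻¹)) := (hodd.pow).of_dvd_nat hord
  obtain ⟨s, hs⟩ := SqRelAux.isSquare_of_odd_orderOf hoddord
  refine ⟨s * x, ?_⟩
  have : u = (u * (x * x)⁻¹) * (x * x) := by group
  rw [this, hs, mul_assoc, mul_mul_mul_comm]; exact (mul_assoc _ _ _).symm

lemma SqRelAux.isSquare_mul_sq_iff {F : Type*} [Field F] {c x : F} (hc : c ≠ 0) :
    IsSquare (c ^ 2 * x) ↔ IsSquare x := by
  constructor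
  · rintro ⟨r, hr⟩
    refine ⟨c⁻¹ * r, ?_⟩
    have hx : x = c⁻¹ ^ 2 * (c ^ 2 * x) := by field_simp
    rw [hx, hr]; ring
  · rintro ⟨r, hr⟩
    exact ⟨c * r, by rw [hr]; ring⟩

lemma SqRelAux.val_mul_modEq {n : ℕ} [NeZero n] (a c : ZMod n) :
    (c * a).val ≡ c.val * a.val [MOD n] := by
  rw [← ZMod.natCast_eq_natCast_iff]
  push_cast
  rw [ZMod.natCast_zmod_val, ZMod.natCast_zmod_val, ZMod.natCast_zmod_val]

end Helpers

section Main

variable (p K : ℕ) [hp : Fact p.Prime]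

open Classical in
/-- The invariant classifying the orbits of the square-multiplication action. -/
noncomputable def sqInvF (a : ZMod (p ^ K)) : ℕ :=
  if a = 0 then 2 * K
  else 2 * padicValNat p a.val +
    (if IsSquare (((a.val / p ^ padicValNat p a.val : ℕ) : ZMod p)) then 0 else 1)

lemma zmod_anatomy {a : ZMod (p ^ K)} (ha : a ≠ 0) :
    a.val ≠ 0 ∧ p ^ padicValNat p a.val ∣ a.val ∧
    a.val = p ^ padicValNat p a.val * (a.val / p ^ padicValNat p a.val) ∧
    ¬ p ∣ (a.val / p ^ padicValNat p a.val) ∧ padicValNat p a.val < K := by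
  haveI : NeZero (p ^ K) := ⟨pow_ne_zero _ hp.out.pos.ne'⟩
  have hval : a.val ≠ 0 := fun h => ha ((ZMod.val_eq_zero a).mp h)
  have hd : p ^ padicValNat p a.val ∣ a.val := pow_padicValNat_dvd
  have heq : a.val = p ^ padicValNat p a.val * (a.val / p ^ padicValNat p a.val) :=
    (Nat.mul_div_cancel' hd).symm
  have hnd : ¬ p ∣ (a.val / p ^ padicValNat p a.val) := by
    intro ⟨t, ht⟩
    apply pow_succ_padicValNat_not_dvd hval (p := p)
    exact ⟨t, by rw [pow_succ, mul_assoc, ← ht, ← heq]⟩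
  have hlt : padicValNat p a.val < K := by
    have h1 : p ^ padicValNat p a.val ≤ a.val := Nat.le_of_dvd (Nat.pos_of_ne_zero hval) hd
    have h2 : a.val < p ^ K := ZMod.val_lt a
    exact (Nat.pow_lt_pow_iff_right hp.out.one_lt).mp (lt_of_le_of_lt h1 h2)
  exact ⟨hval, hd, heq, hnd, hlt⟩

lemma sqRel_anatomy {a b : ZMod (p ^ K)} (ha : a ≠ 0) (j : (ZMod (p ^ K))ˣ)
    (hab : b = (j : ZMod (p ^ K)) ^ 2 * a) :
    b ≠ 0 ∧ padicValNat p b.val = padicValNat p a.val ∧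
    ((b.val / p ^ padicValNat p a.val : ℕ) : ZMod p) =
      (((j : ZMod (p ^ K)).val : ZMod p)) ^ 2 *
        ((a.val / p ^ padicValNat p a.val : ℕ) : ZMod p) := by
  haveI : NeZero (p ^ K) := ⟨pow_ne_zero _ hp.out.pos.ne'⟩
  obtain ⟨hval, hd, heq, hnd, hlt⟩ := zmod_anatomy p K ha
  set v := padicValNat p a.val with hv
  set w := a.val / p ^ v with hw
  set J := (j : ZMod (p ^ K)).val with hJdef
  have hb : b ≠ 0 := by
    intro hb0
    apply ha
    have h0 : ((j ^ 2 : (ZMod (p ^ K))ˣ) : ZMod (p ^ K)) * a = 0 := by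
      rw [Units.val_pow_eq_pow_val, ← hab, hb0]
    exact (Units.mul_right_eq_zero _).mp h0
  have hJ : J.Coprime (p ^ K) := ZMod.val_coe_unit_coprime j
  have hKne : K ≠ 0 := by omega
  have hJp : ¬ p ∣ J :=
    hp.out.coprime_iff_not_dvd.mp
      (Nat.Coprime.coprime_dvd_right (dvd_pow_self p hKne) hJ).symm
  have hmod : b.val ≡ J ^ 2 * a.val [MOD p ^ K] := by
    have h1 : b.val ≡ ((j : ZMod (p ^ K)) ^ 2).val * a.val [MOD p ^ K] := by
      rw [hab]; exact SqRelAux.val_mul_modEq a _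
    have h2 : ((j : ZMod (p ^ K)) ^ 2).val ≡ J ^ 2 [MOD p ^ K] := by
      rw [← ZMod.natCast_eq_natCast_iff]
      push_cast
      rw [ZMod.natCast_zmod_val, ZMod.natCast_zmod_val]
    exact h1.trans (h2.mul_right _)
  have hdvb : p ^ v ∣ b.val := by
    have h3 : b.val ≡ J ^ 2 * a.val [MOD p ^ v] := hmod.of_dvd (pow_dvd_pow p hlt.le)
    have h4 : J ^ 2 * a.val ≡ 0 [MOD p ^ v] :=
      (Nat.modEq_zero_iff_dvd).mpr (hd.mul_left _)
    exact (Nat.modEq_zero_iff_dvd).mp (h3.trans h4)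
  have hndvb : ¬ p ^ (v + 1) ∣ b.val := by
    intro hdvd
    have h3 : b.val ≡ J ^ 2 * a.val [MOD p ^ (v + 1)] :=
      hmod.of_dvd (pow_dvd_pow p (by omega))
    have h5 : p ^ (v + 1) ∣ J ^ 2 * a.val :=
      (Nat.modEq_zero_iff_dvd).mp
        (h3.symm.trans ((Nat.modEq_zero_iff_dvd).mpr hdvd))
    have hJp2 : Nat.Coprime J p := Nat.Coprime.coprime_dvd_right (dvd_pow_self p hKne) hJ
    have hcop : Nat.Coprime (p ^ (v + 1)) (J ^ 2) := (Nat.Coprime.pow 2 (v + 1) hJp2).symm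
    have h6 : p ^ (v + 1) ∣ a.val := Nat.Coprime.dvd_of_dvd_mul_left hcop h5
    exact pow_succ_padicValNat_not_dvd hval h6
  have hbval : b.val ≠ 0 := fun h => hb ((ZMod.val_eq_zero b).mp h)
  have hvb : padicValNat p b.val = v := by
    have h7 := (padicValNat_dvd_iff v b.val).mp hdvb
    have h8 : ¬ (b.val = 0 ∨ v + 1 ≤ padicValNat p b.val) := by
      intro h; rcases h with h | h
      · exact hbval h
      · exact hndvb ((padicValNat_dvd_iff (v + 1) b.val).mpr (Or.inr h))
    omega
  refine ⟨hb, hvb, ?_⟩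
  set wb := b.val / p ^ v with hwb
  have heqb : b.val = p ^ v * wb := (Nat.mul_div_cancel' hdvb).symm
  have hsplit : p ^ K = p ^ v * p ^ (K - v) := by
    rw [← pow_add]; congr 1; omega
  have hmod2 : p ^ v * wb ≡ p ^ v * (J ^ 2 * w) [MOD p ^ v * p ^ (K - v)] := by
    rw [← heqb, ← hsplit]
    calc b.val ≡ J ^ 2 * a.val [MOD p ^ K] := hmod
    _ = p ^ v * (J ^ 2 * w) := by rw [heq]; ring
  have hmod3 : wb ≡ J ^ 2 * w [MOD p ^ (K - v)] :=
    Nat.ModEq.mul_left_cancel' (pow_ne_zero _ hp.out.pos.ne') hmod2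
  have hmod4 : wb ≡ J ^ 2 * w [MOD p] :=
    hmod3.of_dvd (dvd_pow_self p (by omega))
  have := (ZMod.natCast_eq_natCast_iff _ _ _).mpr hmod4
  push_cast at this
  exact this

lemma sqRel_of_eq_inv (hodd : Odd p) {a b : ZMod (p ^ K)} (ha : a ≠ 0) (hb : b ≠ 0)
    (hv : padicValNat p b.val = padicValNat p a.val)
    (hiff : IsSquare ((b.val / p ^ padicValNat p a.val : ℕ) : ZMod p) ↔
      IsSquare ((a.val / p ^ padicValNat p a.val : ℕ) : ZMod p)) :
    sqRel (p ^ K) a b := by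
  haveI : NeZero (p ^ K) := ⟨pow_ne_zero _ hp.out.pos.ne'⟩
  obtain ⟨hval, hd, heq, hnd, hlt⟩ := zmod_anatomy p K ha
  obtain ⟨hvalb, hdb, heqb, hndb, hltb⟩ := zmod_anatomy p K hb
  rw [hv] at hdb heqb hndb
  set v := padicValNat p a.val with hvdef
  set w := a.val / p ^ v with hwdef
  set wb := b.val / p ^ v with hwbdef
  set m := K - v with hmdef
  have hm : 1 ≤ m := by omega
  have hw0 : ((w : ℕ) : ZMod p) ≠ 0 := by
    rw [Ne, ZMod.natCast_eq_zero_iff]; exact hnd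
  have hwb0 : ((wb : ℕ) : ZMod p) ≠ 0 := by
    rw [Ne, ZMod.natCast_eq_zero_iff]; exact hndb
  have hsq : IsSquare (((wb : ℕ) : ZMod p) * ((w : ℕ) : ZMod p)⁻¹) := by
    by_cases hs : IsSquare ((w : ℕ) : ZMod p)
    · exact (hiff.mpr hs).mul (hs.inv)
    · have hsb : ¬ IsSquare ((wb : ℕ) : ZMod p) := fun h => hs (hiff.mp h)
      have h1 : quadraticChar (ZMod p) ((wb : ℕ) : ZMod p) = -1 :=
        quadraticChar_neg_one_iff_not_isSquare.mpr hsb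
      have h2 : quadraticChar (ZMod p) ((w : ℕ) : ZMod p) = -1 :=
        quadraticChar_neg_one_iff_not_isSquare.mpr hs
      have h4 : quadraticChar (ZMod p) (((w : ℕ) : ZMod p)⁻¹) = -1 := by
        have h5 : quadraticChar (ZMod p) ((w : ℕ) : ZMod p) *
            quadraticChar (ZMod p) (((w : ℕ) : ZMod p)⁻¹) = 1 := by
          rw [← map_mul, mul_inv_cancel₀ hw0, map_one]
        rw [h2] at h5; linarith
      have h3 : quadraticChar (ZMod p) (((wb : ℕ) : ZMod p) * ((w : ℕ) : ZMod p)⁻¹) = 1 := by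
        rw [map_mul, h1, h4]; norm_num
      have hne : ((wb : ℕ) : ZMod p) * ((w : ℕ) : ZMod p)⁻¹ ≠ 0 :=
        mul_ne_zero hwb0 (inv_ne_zero hw0)
      exact (quadraticChar_one_iff_isSquare hne).mp h3
  obtain ⟨t, ht⟩ := hsq
  have ht0 : t ≠ 0 := by
    intro h
    rw [h, mul_zero] at ht
    exact mul_ne_zero hwb0 (inv_ne_zero hw0) ht
  have hwcop : Nat.Coprime w (p ^ m) :=
    Nat.Coprime.pow_right _ (hp.out.coprime_iff_not_dvd.mpr hnd).symm
  have hwbcop : Nat.Coprime wb (p ^ m) :=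
    Nat.Coprime.pow_right _ (hp.out.coprime_iff_not_dvd.mpr hndb).symm
  set W := ZMod.unitOfCoprime w hwcop with hW
  set Wb := ZMod.unitOfCoprime wb hwbcop with hWb
  set f := (ZMod.unitsMap (dvd_pow_self p (Nat.one_le_iff_ne_zero.mp hm)) :
      (ZMod (p ^ m))ˣ →* (ZMod p)ˣ) with hf
  have hfW : ((f W : (ZMod p)ˣ) : ZMod p) = ((w : ℕ) : ZMod p) := by
    rw [hf]
    simp only [ZMod.unitsMap, Units.coe_map, ZMod.castHom_apply, MonoidHom.coe_coe,
      ZMod.coe_unitOfCoprime]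
    exact ZMod.cast_natCast (dvd_pow_self p (Nat.one_le_iff_ne_zero.mp hm)) w
  have hfWb : ((f Wb : (ZMod p)ˣ) : ZMod p) = ((wb : ℕ) : ZMod p) := by
    rw [hf]
    simp only [ZMod.unitsMap, Units.coe_map, ZMod.castHom_apply, MonoidHom.coe_coe,
      ZMod.coe_unitOfCoprime]
    exact ZMod.cast_natCast (dvd_pow_self p (Nat.one_le_iff_ne_zero.mp hm)) wb
  have hmapsq : IsSquare (f (Wb * W⁻¹)) := by
    refine ⟨Units.mk0 t ht0, Units.ext ?_⟩
    rw [map_mul, map_inv]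
    push_cast [Units.val_mul, hfWb]
    rw [← Units.val_inv_eq_inv_val] at *
    rw [Units.val_inv_eq_inv_val, hfW, ht, Units.val_mk0]
  obtain ⟨X, hX⟩ := SqRelAux.isSquare_unit_of_isSquare_map p m hm hodd _ hmapsq
  set ξ := (X : ZMod (p ^ m)).val with hxi
  have hWbeq : Wb = X * X * W := by
    rw [← hX]; group
  have hcoeeq : ((wb : ℕ) : ZMod (p ^ m)) = ((ξ * ξ * w : ℕ) : ZMod (p ^ m)) := by
    have := congrArg (Units.val) hWbeq
    push_cast
    rw [ZMod.natCast_zmod_val]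
    simpa [hW, hWb, ZMod.coe_unitOfCoprime] using this
  have hxw : wb ≡ ξ * ξ * w [MOD p ^ m] := (ZMod.natCast_eq_natCast_iff _ _ _).mp hcoeeq
  have h9 : p ^ v * wb ≡ p ^ v * (ξ * ξ * w) [MOD p ^ v * p ^ m] := hxw.mul_left' (c := p ^ v)
  have h10 : p ^ v * p ^ m = p ^ K := by rw [← pow_add]; congr 1; omega
  have h11 : p ^ v * (ξ * ξ * w) = ξ ^ 2 * (p ^ v * w) := by ring
  rw [h10, h11, ← heq] at h9
  have hmm : b.val ≡ ξ ^ 2 * a.val [MOD p ^ K] := by rw [heqb]; exact h9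
  have hξcop : ξ.Coprime (p ^ K) :=
    Nat.Coprime.pow_right _
      (Nat.Coprime.coprime_dvd_right (dvd_pow_self p (Nat.one_le_iff_ne_zero.mp hm))
        (ZMod.val_coe_unit_coprime X))
  refine ⟨ZMod.unitOfCoprime ξ hξcop, ?_⟩
  have hcast : (b.val : ZMod (p ^ K)) = ((ξ ^ 2 * a.val : ℕ) : ZMod (p ^ K)) :=
    (ZMod.natCast_eq_natCast_iff _ _ _).mpr hmm
  rw [ZMod.natCast_zmod_val] at hcast
  push_cast at hcast
  rw [ZMod.natCast_zmod_val] at hcast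
  rw [hcast, ZMod.coe_unitOfCoprime]

lemma sqInvF_lt (hK : 1 ≤ K) (a : ZMod (p ^ K)) : sqInvF p K a < 2 * K + 1 := by
  rw [sqInvF]
  split_ifs with h1 h2
  · omega
  · have hlt := (zmod_anatomy p K h1).2.2.2.2; omega
  · have hlt := (zmod_anatomy p K h1).2.2.2.2; omega

lemma sqInvF_const (hK : 1 ≤ K) {a b : ZMod (p ^ K)} (h : sqRel (p ^ K) a b) :
    sqInvF p K a = sqInvF p K b := by
  obtain ⟨j, hab⟩ := h
  by_cases ha : a = 0
  · have hb : b = 0 := by rw [hab, ha, mul_zero]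
    rw [ha, hb]
  · obtain ⟨hb, hv, hu⟩ := sqRel_anatomy p K ha j hab
    have hKne : K ≠ 0 := by omega
    have hJp : ¬ p ∣ (j : ZMod (p ^ K)).val :=
      hp.out.coprime_iff_not_dvd.mp
        (Nat.Coprime.coprime_dvd_right (dvd_pow_self p hKne)
          (ZMod.val_coe_unit_coprime j)).symm
    have hJ0 : (((j : ZMod (p ^ K)).val : ℕ) : ZMod p) ≠ 0 := by
      rw [Ne, ZMod.natCast_eq_zero_iff]; exact hJp
    have hiff : IsSquare ((b.val / p ^ padicValNat p a.val : ℕ) : ZMod p) ↔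
        IsSquare ((a.val / p ^ padicValNat p a.val : ℕ) : ZMod p) := by
      rw [hu]; exact SqRelAux.isSquare_mul_sq_iff hJ0
    rw [sqInvF, sqInvF, if_neg ha, if_neg hb, hv]
    congr 1
    exact if_congr hiff.symm rfl rfl

lemma sqRel_of_sqInvF_eq (hK : 1 ≤ K) (hodd : Odd p) {a b : ZMod (p ^ K)}
    (h : sqInvF p K a = sqInvF p K b) : sqRel (p ^ K) a b := by
  by_cases ha : a = 0 <;> by_cases hb : b = 0
  · exact ⟨1, by simp [ha, hb]⟩
  · exfalso
    have hvb := (zmod_anatomy p K hb).2.2.2.2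
    rw [sqInvF, sqInvF, if_pos ha, if_neg hb] at h
    split_ifs at h <;> omega
  · exfalso
    have hva := (zmod_anatomy p K ha).2.2.2.2
    rw [sqInvF, sqInvF, if_neg ha, if_pos hb] at h
    split_ifs at h <;> omega
  · have hva := (zmod_anatomy p K ha).2.2.2.2
    have hvb := (zmod_anatomy p K hb).2.2.2.2
    rw [sqInvF, sqInvF, if_neg ha, if_neg hb] at h
    split_ifs at h with h1 h2 h2
    · have hv : padicValNat p b.val = padicValNat p a.val := by omega
      refine sqRel_of_eq_inv p K hodd ha hb hv ?_
      rw [hv] at h2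
      exact iff_of_true h2 h1
    · exact absurd h (by omega)
    · exact absurd h (by omega)
    · have hv : padicValNat p b.val = padicValNat p a.val := by omega
      refine sqRel_of_eq_inv p K hodd ha hb hv ?_
      rw [hv] at h2
      exact iff_of_false h2 h1

lemma sqInvF_zero : sqInvF p K 0 = 2 * K := by rw [sqInvF, if_pos rfl]

lemma sqInvF_pow (v : ℕ) (hv : v < K) :
    sqInvF p K ((p ^ v : ℕ) : ZMod (p ^ K)) = 2 * v := by
  have hne : ((p ^ v : ℕ) : ZMod (p ^ K)) ≠ 0 := by
    rw [Ne, ZMod.natCast_eq_zero_iff]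
    intro hdvd
    exact absurd ((Nat.pow_dvd_pow_iff_le_right hp.out.one_lt).mp hdvd) (by omega)
  have hval : ((p ^ v : ℕ) : ZMod (p ^ K)).val = p ^ v :=
    ZMod.val_natCast_of_lt ((Nat.pow_lt_pow_iff_right hp.out.one_lt).mpr hv)
  rw [sqInvF, if_neg hne, hval, padicValNat.prime_pow,
    Nat.div_self (pow_pos hp.out.pos v)]
  simp

lemma sqInvF_nonres (v : ℕ) (hv : v < K) (c : ZMod p) (hc : ¬ IsSquare c) :
    sqInvF p K ((p ^ v * c.val : ℕ) : ZMod (p ^ K)) = 2 * v + 1 := by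
  haveI : NeZero p := ⟨hp.out.pos.ne'⟩
  have hc0 : c ≠ 0 := fun h => hc (h ▸ ⟨0, by simp⟩)
  have hcv : c.val ≠ 0 := fun h => hc0 ((ZMod.val_eq_zero c).mp h)
  have hcvp : c.val < p := ZMod.val_lt c
  have hpc : ¬ p ∣ c.val := fun hd => absurd (Nat.le_of_dvd (Nat.pos_of_ne_zero hcv) hd)
    (by omega)
  have hN : p ^ v * c.val < p ^ K := by
    calc p ^ v * c.val < p ^ v * p := by
          nlinarith [pow_pos hp.out.pos v]
    _ = p ^ (v + 1) := by rw [pow_succ]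
    _ ≤ p ^ K := Nat.pow_le_pow_right hp.out.pos (by omega)
  have hvalN : ((p ^ v * c.val : ℕ) : ZMod (p ^ K)).val = p ^ v * c.val :=
    ZMod.val_natCast_of_lt hN
  have hne : ((p ^ v * c.val : ℕ) : ZMod (p ^ K)) ≠ 0 := by
    intro h
    have := (ZMod.val_eq_zero _).mpr h
    rw [hvalN] at this
    exact hcv (by simpa [pow_ne_zero _ hp.out.pos.ne', hp.out.ne_zero] using this)
  have hpv : padicValNat p (p ^ v * c.val) = v := by
    rw [padicValNat.mul (pow_ne_zero _ hp.out.pos.ne') hcv, padicValNat.prime_pow,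
      padicValNat.eq_zero_of_not_dvd hpc, add_zero]
  have hdiv : p ^ v * c.val / p ^ v = c.val := Nat.mul_div_cancel_left _ (pow_pos hp.out.pos v)
  rw [sqInvF, if_neg hne, hvalN, hpv, hdiv, ZMod.natCast_zmod_val, if_neg hc]

end Main

/-- For an odd prime `p` and `K ≥ 1`, the number of equivalence classes of `ℤ/p^Kℤ`
under the square-multiplication relation is `2K + 1`. -/
theorem card_sqRel_classes_odd_prime_power (p K : ℕ) (hp : p.Prime) (hodd : Odd p)
    (hK : 1 ≤ K) :
    Nat.card (Quot (sqRel (p ^ K))) = 2 * K + 1 := by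
  haveI : Fact p.Prime := ⟨hp⟩
  have hcard : Nat.card (Fin (2 * K + 1)) = 2 * K + 1 := by simp
  rw [← hcard]
  apply Nat.card_eq_of_bijective
    (Quot.lift (fun a => (⟨sqInvF p K a, sqInvF_lt p K hK a⟩ : Fin (2 * K + 1)))
      (fun a b h => Fin.ext (sqInvF_const p K hK h)))
  constructor
  · intro x y
    induction x using Quot.ind with | _ a => ?_
    induction y using Quot.ind with | _ b => ?_
    intro hFeq
    have h : sqInvF p K a = sqInvF p K b := congrArg Fin.val hFeq
    exact Quot.sound (sqRel_of_sqInvF_eq p K hK hodd h)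
  · rintro ⟨i, hi⟩
    rcases Nat.even_or_odd i with ⟨v, hv⟩ | ⟨v, hv⟩
    · by_cases hvK : v < K
      · refine ⟨Quot.mk _ ((p ^ v : ℕ) : ZMod (p ^ K)), Fin.ext ?_⟩
        show sqInvF p K ((p ^ v : ℕ) : ZMod (p ^ K)) = i
        rw [sqInvF_pow p K v hvK]; omega
      · refine ⟨Quot.mk _ 0, Fin.ext ?_⟩
        show sqInvF p K 0 = i
        rw [sqInvF_zero]; omega
    · have hvK : v < K := by omega
      have h2 : ringChar (ZMod p) ≠ 2 := by
        rw [ZMod.ringChar_zmod_n]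
        intro hp2
        rw [hp2] at hodd
        exact (Nat.not_odd_iff_even.mpr (by decide)) hodd
      obtain ⟨c, hc⟩ := FiniteField.exists_nonsquare h2
      refine ⟨Quot.mk _ ((p ^ v * c.val : ℕ) : ZMod (p ^ K)), Fin.ext ?_⟩
      show sqInvF p K ((p ^ v * c.val : ℕ) : ZMod (p ^ K)) = i
      rw [sqInvF_nonres p K v hvK c hc]; omega
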